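/- Suppose X_+ = A_s X_- + B_s U_- for some (A_s,B_s). Then rank(X_+ - λ X_-) = n for all λ ∈ ℂ if and only if every (A,B) with X_+ = A X_- + B U_- is controllable (i.e., rank[A - λI, B] = n for all λ ∈ ℂ). -/

import Mathlib

open Matrix

section AuxHautus

lemma aux_rank_ne_of_vecMul_eq_zero {k : ℕ} {l : Type*} [Fintype l] {K : Type*} [Field K]
    (M : Matrix (Fin k) l K) (η : Fin k → K) (hη : η ≠ 0)
    (h : Matrix.vecMul η M = 0) : M.rank ≠ k := by
  rw [← Matrix.rank_transpose]
  intro hr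
  have hker : η ∈ LinearMap.ker Mᵀ.mulVecLin := by
    simp [Matrix.mulVecLin, Matrix.mulVec_transpose, h]
  have h1 : 0 < Module.finrank K (LinearMap.ker Mᵀ.mulVecLin) :=
    Module.finrank_pos_iff_exists_ne_zero.mpr ⟨⟨η, hker⟩, by simpa using hη⟩
  have := Mᵀ.mulVecLin.finrank_range_add_finrank_ker
  simp only [Module.finrank_fintype_fun_eq_card, Fintype.card_fin] at this
  rw [Matrix.rank] at hr
  omega

lemma aux_exists_vecMul_of_rank_ne {k l : ℕ} {K : Type*} [Field K]
    (M : Matrix (Fin k) (Fin l) K) (h : M.rank ≠ k) :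
    ∃ η : Fin k → K, η ≠ 0 ∧ Matrix.vecMul η M = 0 := by
  have hker : LinearMap.ker Mᵀ.mulVecLin ≠ ⊥ := by
    intro hbot
    apply h
    have := Mᵀ.mulVecLin.finrank_range_add_finrank_ker
    rw [hbot] at this
    simp only [Module.finrank_fintype_fun_eq_card, Fintype.card_fin, finrank_bot,
      add_zero] at this
    rw [← Matrix.rank_transpose, Matrix.rank, this]
  obtain ⟨η, hmem, hne⟩ := Submodule.exists_mem_ne_zero_of_ne_bot hker
  refine ⟨η, hne, ?_⟩
  simpa [Matrix.mulVecLin, Matrix.mulVec_transpose] using hmem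

def auxOuterM {n l : ℕ} (w : Fin n → ℝ) (k : Fin l → ℝ) : Matrix (Fin n) (Fin l) ℝ :=
  Matrix.of fun i j => w i * k j

lemma aux_vecMul_outerM {n l : ℕ} (v w : Fin n → ℝ) (k : Fin l → ℝ) :
    v ᵥ* auxOuterM w k = (v ⬝ᵥ w) • k := by
  ext j
  simp only [auxOuterM, vecMul, dotProduct, Pi.smul_apply, smul_eq_mul, of_apply,
    Finset.sum_mul]
  exact Finset.sum_congr rfl fun i _ => by ring

lemma aux_outerM_mul {n l t : ℕ} (w : Fin n → ℝ) (k : Fin l → ℝ)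
    (M : Matrix (Fin l) (Fin t) ℝ) :
    auxOuterM w k * M = auxOuterM w (k ᵥ* M) := by
  ext i j
  simp only [auxOuterM, Matrix.mul_apply, vecMul, dotProduct, of_apply, Finset.mul_sum]
  exact Finset.sum_congr rfl fun i _ => by ring

lemma aux_outerM_add {n l : ℕ} (w : Fin n → ℝ) (k k' : Fin l → ℝ) :
    auxOuterM w (k + k') = auxOuterM w k + auxOuterM w k' := by
  ext i j; simp [auxOuterM]; ring

lemma aux_outerM_eq_zero {n l : ℕ} (w : Fin n → ℝ) {k : Fin l → ℝ} (hk : k = 0) :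
    auxOuterM w k = 0 := by
  subst hk; ext i j; simp [auxOuterM]

lemma aux_vecMul_map_ofReal {n l : ℕ} (p q : Fin n → ℝ) (A : Matrix (Fin n) (Fin l) ℝ) :
    (fun i => (p i : ℂ) + q i * Complex.I) ᵥ* (A.map Complex.ofReal)
      = fun j => ((p ᵥ* A) j : ℂ) + ((q ᵥ* A) j : ℂ) * Complex.I := by
  ext j
  simp only [vecMul, dotProduct, Matrix.map_apply]
  rw [Complex.ofReal_sum, Complex.ofReal_sum, Finset.sum_mul, ← Finset.sum_add_distrib]
  push_cast
  exact Finset.sum_congr rfl fun i _ => by ring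

lemma aux_vecMul_smul_matrix {n l : ℕ} (v : Fin n → ℂ) (z : ℂ)
    (M : Matrix (Fin n) (Fin l) ℂ) :
    v ᵥ* (z • M) = z • (v ᵥ* M) := by
  ext j
  simp only [vecMul, dotProduct, Matrix.smul_apply, Pi.smul_apply, smul_eq_mul,
    Finset.mul_sum]
  exact Finset.sum_congr rfl fun i _ => by ring

lemma aux_eta_ne_zero {n : ℕ} {p q : Fin n → ℝ} (hpq : ¬(p = 0 ∧ q = 0)) :
    (fun i => (p i : ℂ) + q i * Complex.I) ≠ 0 := by
  intro h
  apply hpq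
  constructor <;> funext i <;>
  · have := congrFun h i
    simp only [Pi.zero_apply, Complex.ext_iff, Complex.add_re, Complex.ofReal_re,
      Complex.mul_re, Complex.I_re, Complex.I_im, Complex.ofReal_im, Complex.add_im,
      Complex.mul_im, Complex.zero_re, Complex.zero_im] at this
    simp only [Pi.zero_apply]
    linarith [this.1, this.2]

lemma aux_hautus_fail {n m : ℕ} (A : Matrix (Fin n) (Fin n) ℝ) (B : Matrix (Fin n) (Fin m) ℝ)
    (p q : Fin n → ℝ) (α β : ℝ)
    (hA1 : p ᵥ* A = α • p - β • q) (hA2 : q ᵥ* A = β • p + α • q)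
    (hB1 : p ᵥ* B = 0) (hB2 : q ᵥ* B = 0) :
    (fun i => (p i : ℂ) + q i * Complex.I) ᵥ*
      Matrix.fromCols
        (A.map Complex.ofReal - ((α : ℂ) + (β : ℂ) * Complex.I) • 1)
        (B.map Complex.ofReal) = 0 := by
  set η : Fin n → ℂ := fun i => (p i : ℂ) + q i * Complex.I with hη
  set z : ℂ := (α : ℂ) + (β : ℂ) * Complex.I with hz
  have hone : η ᵥ* (z • (1 : Matrix (Fin n) (Fin n) ℂ)) = z • η := by
    rw [aux_vecMul_smul_matrix, Matrix.vecMul_one]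
  have hAc : η ᵥ* (A.map Complex.ofReal) = z • η := by
    rw [hη, aux_vecMul_map_ofReal p q A, hA1, hA2]
    funext j
    simp only [Pi.sub_apply, Pi.add_apply, Pi.smul_apply, smul_eq_mul, hz]
    push_cast
    ring_nf
    simp [Complex.I_sq]
    ring
  have hBc : η ᵥ* (B.map Complex.ofReal) = 0 := by
    rw [hη, aux_vecMul_map_ofReal p q B, hB1, hB2]
    funext j; simp
  rw [Matrix.vecMul_fromCols, Matrix.vecMul_sub, hone, hAc, hBc, sub_self]
  ext (j | j) <;> simp

lemma aux_extract_real {n T : ℕ} (Xm Xp : Matrix (Fin n) (Fin T) ℝ) (z : ℂ)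
    (η : Fin n → ℂ)
    (hrow : η ᵥ* (Xp.map Complex.ofReal - z • Xm.map Complex.ofReal) = 0) :
    (fun i => (η i).re) ᵥ* Xp
        = z.re • ((fun i => (η i).re) ᵥ* Xm) - z.im • ((fun i => (η i).im) ᵥ* Xm)
      ∧ (fun i => (η i).im) ᵥ* Xp
        = z.im • ((fun i => (η i).re) ᵥ* Xm) + z.re • ((fun i => (η i).im) ᵥ* Xm) := by
  set p : Fin n → ℝ := fun i => (η i).re with hp
  set q : Fin n → ℝ := fun i => (η i).im with hq
  have hη : η = fun i => (p i : ℂ) + q i * Complex.I := by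
    funext i; rw [hp, hq]; exact (Complex.re_add_im _).symm
  rw [Matrix.vecMul_sub, aux_vecMul_smul_matrix, sub_eq_zero, hη,
    aux_vecMul_map_ofReal p q Xp, aux_vecMul_map_ofReal p q Xm] at hrow
  constructor <;> funext j <;>
  · have := congrFun hrow j
    simp only [Pi.smul_apply, smul_eq_mul, Complex.ext_iff, Complex.add_re, Complex.add_im,
      Complex.mul_re, Complex.mul_im, Complex.ofReal_re, Complex.ofReal_im,
      Complex.I_re, Complex.I_im] at this
    simp only [Pi.sub_apply, Pi.add_apply, Pi.smul_apply, smul_eq_mul]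
    obtain ⟨h1, h2⟩ := this
    linarith

lemma aux_solve2 {l : ℕ} (a b cc : ℝ) (hd : a * cc - b ^ 2 ≠ 0) (k1 k2 : Fin l → ℝ) :
    a • ((a * cc - b ^ 2)⁻¹ • (cc • k1 - b • k2))
      + b • ((a * cc - b ^ 2)⁻¹ • (a • k2 - b • k1)) = k1 := by
  funext j
  simp only [Pi.add_apply, Pi.smul_apply, Pi.sub_apply, smul_eq_mul]
  field_simp
  ring

lemma aux_construct_one {n m T : ℕ}
    (Xm Xp : Matrix (Fin n) (Fin T) ℝ) (Um : Matrix (Fin m) (Fin T) ℝ)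
    (As : Matrix (Fin n) (Fin n) ℝ) (Bs : Matrix (Fin n) (Fin m) ℝ)
    (hdata : Xp = As * Xm + Bs * Um)
    (w : Fin n → ℝ) (hw : w ≠ 0) (μ : ℝ)
    (heq : w ᵥ* Xp = μ • (w ᵥ* Xm)) :
    ∃ (A : Matrix (Fin n) (Fin n) ℝ) (B : Matrix (Fin n) (Fin m) ℝ),
      Xp = A * Xm + B * Um ∧ w ᵥ* A = μ • w ∧ w ᵥ* B = 0 := by
  have hww : w ⬝ᵥ w ≠ 0 := fun h => hw (dotProduct_self_eq_zero.mp h)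
  set c : ℝ := (w ⬝ᵥ w)⁻¹ with hc
  set kA : Fin n → ℝ := μ • w - w ᵥ* As with hkA
  set kB : Fin m → ℝ := -(w ᵥ* Bs) with hkB
  have hcomb : kA ᵥ* Xm + kB ᵥ* Um = 0 := by
    rw [hkA, hkB, Matrix.sub_vecMul, Matrix.smul_vecMul, Matrix.neg_vecMul,
      Matrix.vecMul_vecMul, Matrix.vecMul_vecMul]
    rw [hdata, Matrix.vecMul_add] at heq
    rw [← heq]; abel
  refine ⟨As + auxOuterM w (c • kA), Bs + auxOuterM w (c • kB), ?_, ?_, ?_⟩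
  · rw [Matrix.add_mul, Matrix.add_mul, aux_outerM_mul, aux_outerM_mul,
      Matrix.smul_vecMul, Matrix.smul_vecMul]
    have : auxOuterM w (c • (kA ᵥ* Xm)) + auxOuterM w (c • (kB ᵥ* Um)) = 0 := by
      rw [← aux_outerM_add, ← smul_add, hcomb, smul_zero]
      exact aux_outerM_eq_zero w rfl
    rw [hdata]
    calc As * Xm + Bs * Um
        = As * Xm + Bs * Um +
            (auxOuterM w (c • (kA ᵥ* Xm)) + auxOuterM w (c • (kB ᵥ* Um))) := by
          rw [this, add_zero]
      _ = As * Xm + auxOuterM w (c • (kA ᵥ* Xm))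
            + (Bs * Um + auxOuterM w (c • (kB ᵥ* Um))) := by abel
  · rw [Matrix.vecMul_add, aux_vecMul_outerM, smul_smul, hc, mul_inv_cancel₀ hww,
      one_smul, hkA]
    simp
  · rw [Matrix.vecMul_add, aux_vecMul_outerM, smul_smul, hc, mul_inv_cancel₀ hww,
      one_smul, hkB]
    simp

lemma aux_construct_two {n m T : ℕ}
    (Xm Xp : Matrix (Fin n) (Fin T) ℝ) (Um : Matrix (Fin m) (Fin T) ℝ)
    (As : Matrix (Fin n) (Fin n) ℝ) (Bs : Matrix (Fin n) (Fin m) ℝ)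
    (hdata : Xp = As * Xm + Bs * Um)
    (p q : Fin n → ℝ) (α β : ℝ)
    (hd : (p ⬝ᵥ p) * (q ⬝ᵥ q) - (p ⬝ᵥ q) ^ 2 ≠ 0)
    (h1 : p ᵥ* Xp = α • (p ᵥ* Xm) - β • (q ᵥ* Xm))
    (h2 : q ᵥ* Xp = β • (p ᵥ* Xm) + α • (q ᵥ* Xm)) :
    ∃ (A : Matrix (Fin n) (Fin n) ℝ) (B : Matrix (Fin n) (Fin m) ℝ),
      Xp = A * Xm + B * Um ∧ p ᵥ* A = α • p - β • q ∧ q ᵥ* A = β • p + α • q ∧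
        p ᵥ* B = 0 ∧ q ᵥ* B = 0 := by
  set a : ℝ := p ⬝ᵥ p with ha
  set b : ℝ := p ⬝ᵥ q with hb
  set cc : ℝ := q ⬝ᵥ q with hcc
  set d : ℝ := a * cc - b ^ 2 with hdd
  set kA1 : Fin n → ℝ := (α • p - β • q) - p ᵥ* As with hkA1
  set kA2 : Fin n → ℝ := (β • p + α • q) - q ᵥ* As with hkA2
  set kB1 : Fin m → ℝ := -(p ᵥ* Bs) with hkB1
  set kB2 : Fin m → ℝ := -(q ᵥ* Bs) with hkB2
  set uA : Fin n → ℝ := d⁻¹ • (cc • kA1 - b • kA2) with huA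
  set vA : Fin n → ℝ := d⁻¹ • (a • kA2 - b • kA1) with hvA
  set uB : Fin m → ℝ := d⁻¹ • (cc • kB1 - b • kB2) with huB
  set vB : Fin m → ℝ := d⁻¹ • (a • kB2 - b • kB1) with hvB
  have hcomb1 : kA1 ᵥ* Xm + kB1 ᵥ* Um = 0 := by
    rw [hkA1, hkB1, Matrix.sub_vecMul, Matrix.neg_vecMul, Matrix.vecMul_vecMul,
      Matrix.vecMul_vecMul, Matrix.sub_vecMul, Matrix.smul_vecMul, Matrix.smul_vecMul]
    rw [hdata, Matrix.vecMul_add] at h1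
    rw [← h1]; abel
  have hcomb2 : kA2 ᵥ* Xm + kB2 ᵥ* Um = 0 := by
    rw [hkA2, hkB2, Matrix.sub_vecMul, Matrix.neg_vecMul, Matrix.vecMul_vecMul,
      Matrix.vecMul_vecMul, Matrix.add_vecMul, Matrix.smul_vecMul, Matrix.smul_vecMul]
    rw [hdata, Matrix.vecMul_add] at h2
    rw [← h2]; abel
  refine ⟨As + (auxOuterM p uA + auxOuterM q vA), Bs + (auxOuterM p uB + auxOuterM q vB),
    ?_, ?_, ?_, ?_, ?_⟩
  · have hu : uA ᵥ* Xm + uB ᵥ* Um = 0 := by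
      rw [huA, huB, Matrix.smul_vecMul, Matrix.smul_vecMul, Matrix.sub_vecMul,
        Matrix.sub_vecMul, Matrix.smul_vecMul, Matrix.smul_vecMul, Matrix.smul_vecMul,
        Matrix.smul_vecMul, ← smul_add]
      have : cc • (kA1 ᵥ* Xm) - b • (kA2 ᵥ* Xm) + (cc • (kB1 ᵥ* Um) - b • (kB2 ᵥ* Um))
          = cc • (kA1 ᵥ* Xm + kB1 ᵥ* Um) - b • (kA2 ᵥ* Xm + kB2 ᵥ* Um) := by
        rw [smul_add, smul_add]; abel
      rw [this, hcomb1, hcomb2, smul_zero, smul_zero, sub_zero, smul_zero]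
    have hv : vA ᵥ* Xm + vB ᵥ* Um = 0 := by
      rw [hvA, hvB, Matrix.smul_vecMul, Matrix.smul_vecMul, Matrix.sub_vecMul,
        Matrix.sub_vecMul, Matrix.smul_vecMul, Matrix.smul_vecMul, Matrix.smul_vecMul,
        Matrix.smul_vecMul, ← smul_add]
      have : a • (kA2 ᵥ* Xm) - b • (kA1 ᵥ* Xm) + (a • (kB2 ᵥ* Um) - b • (kB1 ᵥ* Um))
          = a • (kA2 ᵥ* Xm + kB2 ᵥ* Um) - b • (kA1 ᵥ* Xm + kB1 ᵥ* Um) := by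
        rw [smul_add, smul_add]; abel
      rw [this, hcomb1, hcomb2, smul_zero, smul_zero, sub_zero, smul_zero]
    rw [Matrix.add_mul, Matrix.add_mul, Matrix.add_mul, Matrix.add_mul,
      aux_outerM_mul, aux_outerM_mul, aux_outerM_mul, aux_outerM_mul, hdata]
    have e1 : auxOuterM p (uA ᵥ* Xm) + auxOuterM p (uB ᵥ* Um) = 0 := by
      rw [← aux_outerM_add]
      exact aux_outerM_eq_zero p hu
    have e2 : auxOuterM q (vA ᵥ* Xm) + auxOuterM q (vB ᵥ* Um) = 0 := by
      rw [← aux_outerM_add]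
      exact aux_outerM_eq_zero q hv
    calc As * Xm + Bs * Um
        = As * Xm + Bs * Um + ((auxOuterM p (uA ᵥ* Xm) + auxOuterM p (uB ᵥ* Um))
            + (auxOuterM q (vA ᵥ* Xm) + auxOuterM q (vB ᵥ* Um))) := by
          rw [e1, e2]; abel
      _ = As * Xm + (auxOuterM p (uA ᵥ* Xm) + auxOuterM q (vA ᵥ* Xm))
            + (Bs * Um + (auxOuterM p (uB ᵥ* Um) + auxOuterM q (vB ᵥ* Um))) := by abel
  · rw [Matrix.vecMul_add, Matrix.vecMul_add, aux_vecMul_outerM, aux_vecMul_outerM,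
      ← ha, ← hb, huA, hvA]
    have : a • (d⁻¹ • (cc • kA1 - b • kA2)) + b • (d⁻¹ • (a • kA2 - b • kA1)) = kA1 := by
      rw [hdd]; exact aux_solve2 a b cc hd kA1 kA2
    rw [this, hkA1]; abel
  · rw [Matrix.vecMul_add, Matrix.vecMul_add, aux_vecMul_outerM, aux_vecMul_outerM,
      dotProduct_comm q p, ← hb, ← hcc, huA, hvA]
    have : b • (d⁻¹ • (cc • kA1 - b • kA2)) + cc • (d⁻¹ • (a • kA2 - b • kA1)) = kA2 := by
      have h' : cc * a - b ^ 2 ≠ 0 := by rw [mul_comm]; exact hd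
      have := aux_solve2 cc b a h' kA2 kA1
      rw [hdd]
      calc b • ((a * cc - b ^ 2)⁻¹ • (cc • kA1 - b • kA2))
            + cc • ((a * cc - b ^ 2)⁻¹ • (a • kA2 - b • kA1))
          = cc • ((cc * a - b ^ 2)⁻¹ • (a • kA2 - b • kA1))
            + b • ((cc * a - b ^ 2)⁻¹ • (cc • kA1 - b • kA2)) := by
            rw [mul_comm a cc]; abel
        _ = kA2 := this
    rw [this, hkA2]; abel
  · rw [Matrix.vecMul_add, Matrix.vecMul_add, aux_vecMul_outerM, aux_vecMul_outerM,
      ← ha, ← hb, huB, hvB]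
    have : a • (d⁻¹ • (cc • kB1 - b • kB2)) + b • (d⁻¹ • (a • kB2 - b • kB1)) = kB1 := by
      rw [hdd]; exact aux_solve2 a b cc hd kB1 kB2
    rw [this, hkB1]; abel
  · rw [Matrix.vecMul_add, Matrix.vecMul_add, aux_vecMul_outerM, aux_vecMul_outerM,
      dotProduct_comm q p, ← hb, ← hcc, huB, hvB]
    have : b • (d⁻¹ • (cc • kB1 - b • kB2)) + cc • (d⁻¹ • (a • kB2 - b • kB1)) = kB2 := by
      have h' : cc * a - b ^ 2 ≠ 0 := by rw [mul_comm]; exact hd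
      have := aux_solve2 cc b a h' kB2 kB1
      rw [hdd]
      calc b • ((a * cc - b ^ 2)⁻¹ • (cc • kB1 - b • kB2))
            + cc • ((a * cc - b ^ 2)⁻¹ • (a • kB2 - b • kB1))
          = cc • ((cc * a - b ^ 2)⁻¹ • (a • kB2 - b • kB1))
            + b • ((cc * a - b ^ 2)⁻¹ • (cc • kB1 - b • kB2)) := by
            rw [mul_comm a cc]; abel
        _ = kB2 := this
    rw [this, hkB2]; abel

lemma aux_map_ofReal_mul {a b c : ℕ} (M : Matrix (Fin a) (Fin b) ℝ)
    (N : Matrix (Fin b) (Fin c) ℝ) :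
    (M * N).map Complex.ofReal = M.map Complex.ofReal * N.map Complex.ofReal := by
  ext i j
  simp only [Matrix.map_apply, Matrix.mul_apply]
  push_cast
  rfl

lemma aux_map_ofReal_add {a b : ℕ} (M N : Matrix (Fin a) (Fin b) ℝ) :
    (M + N).map Complex.ofReal = M.map Complex.ofReal + N.map Complex.ofReal := by
  ext i j
  simp [Matrix.map_apply]

end AuxHautus

/-- Data-driven Hautus test for controllability: assuming the data are generated by
some system, rank(X₊ - λX₋) = n for all λ ∈ ℂ iff every system (A,B) consistent
with the data is controllable (Hautus test). -/
theorem informativity_for_controllability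
    (n m T : ℕ)
    (Xm Xp : Matrix (Fin n) (Fin T) ℝ) (Um : Matrix (Fin m) (Fin T) ℝ)
    (As : Matrix (Fin n) (Fin n) ℝ) (Bs : Matrix (Fin n) (Fin m) ℝ)
    (hdata : Xp = As * Xm + Bs * Um) :
    (∀ z : ℂ, (Xp.map Complex.ofReal - z • Xm.map Complex.ofReal).rank = n)
    ↔ (∀ (A : Matrix (Fin n) (Fin n) ℝ) (B : Matrix (Fin n) (Fin m) ℝ),
        Xp = A * Xm + B * Um →
        ∀ z : ℂ,
          (Matrix.fromCols
            (A.map Complex.ofReal - z • (1 : Matrix (Fin n) (Fin n) ℂ))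
            (B.map Complex.ofReal)).rank = n) := by
  constructor
  · intro h A B hAB z
    have hfac : Xp.map Complex.ofReal - z • Xm.map Complex.ofReal
        = Matrix.fromCols
            (A.map Complex.ofReal - z • (1 : Matrix (Fin n) (Fin n) ℂ))
            (B.map Complex.ofReal)
          * Matrix.fromRows (Xm.map Complex.ofReal) (Um.map Complex.ofReal) := by
      rw [Matrix.fromCols_mul_fromRows, Matrix.sub_mul, Matrix.smul_mul,
        Matrix.one_mul, ← aux_map_ofReal_mul, ← aux_map_ofReal_mul, hAB,
        aux_map_ofReal_add, aux_map_ofReal_mul, aux_map_ofReal_mul]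
      abel
    have hle := Matrix.rank_le_card_height (Matrix.fromCols
      (A.map Complex.ofReal - z • (1 : Matrix (Fin n) (Fin n) ℂ))
      (B.map Complex.ofReal))
    simp only [Fintype.card_fin] at hle
    have hge := Matrix.rank_mul_le_left
      (Matrix.fromCols
        (A.map Complex.ofReal - z • (1 : Matrix (Fin n) (Fin n) ℂ))
        (B.map Complex.ofReal))
      (Matrix.fromRows (Xm.map Complex.ofReal) (Um.map Complex.ofReal))
    rw [← hfac, h z] at hge
    omega
  · intro hctrl z
    by_contra hne
    obtain ⟨η, hη0, hrow⟩ := aux_exists_vecMul_of_rank_ne _ hne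
    obtain ⟨h1, h2⟩ := aux_extract_real Xm Xp z η hrow
    set p : Fin n → ℝ := fun i => (η i).re with hp
    set q : Fin n → ℝ := fun i => (η i).im with hq
    set α : ℝ := z.re with hα
    set β : ℝ := z.im with hβ
    have hpq : ¬(p = 0 ∧ q = 0) := by
      rintro ⟨hp0, hq0⟩
      apply hη0
      funext i
      have h1 := congrFun hp0 i
      have h2 := congrFun hq0 i
      simp only [hp, hq, Pi.zero_apply] at h1 h2
      exact Complex.ext h1 h2
    by_cases hd : (p ⬝ᵥ p) * (q ⬝ᵥ q) - (p ⬝ᵥ q) ^ 2 ≠ 0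
    · obtain ⟨A, B, hcons, hA1, hA2, hB1, hB2⟩ :=
        aux_construct_two Xm Xp Um As Bs hdata p q α β hd h1 h2
      have hfail := aux_hautus_fail A B p q α β hA1 hA2 hB1 hB2
      have hnz := aux_eta_ne_zero hpq
      have hrk := hctrl A B hcons ((α : ℂ) + (β : ℂ) * Complex.I)
      exact aux_rank_ne_of_vecMul_eq_zero _ _ hnz hfail hrk
    · push_neg at hd
      obtain ⟨w, hw0, μ, heq⟩ : ∃ w : Fin n → ℝ, w ≠ 0 ∧ ∃ μ : ℝ,
          w ᵥ* Xp = μ • (w ᵥ* Xm) := by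
        rcases eq_or_ne q 0 with hq0 | hq0
        · refine ⟨p, fun h => hpq ⟨h, hq0⟩, α, ?_⟩
          rw [h1, hq0]
          simp
        · have hcc : q ⬝ᵥ q ≠ 0 := fun h => hq0 (dotProduct_self_eq_zero.mp h)
          have hkey : (q ⬝ᵥ q) • p - (p ⬝ᵥ q) • q = 0 := by
            apply dotProduct_self_eq_zero.mp
            have expand : ((q ⬝ᵥ q) • p - (p ⬝ᵥ q) • q) ⬝ᵥ ((q ⬝ᵥ q) • p - (p ⬝ᵥ q) • q)
                = (q ⬝ᵥ q) * ((q ⬝ᵥ q) * (p ⬝ᵥ p)) - (q ⬝ᵥ q) * ((p ⬝ᵥ q) * (p ⬝ᵥ q))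
                  - ((p ⬝ᵥ q) * ((q ⬝ᵥ q) * (p ⬝ᵥ q)) - (p ⬝ᵥ q) * ((p ⬝ᵥ q) * (q ⬝ᵥ q))) := by
              rw [sub_dotProduct, dotProduct_sub, dotProduct_sub, smul_dotProduct,
                smul_dotProduct, smul_dotProduct, smul_dotProduct, dotProduct_smul,
                dotProduct_smul, dotProduct_smul, dotProduct_smul]
              rw [dotProduct_comm q p]
              simp only [smul_eq_mul]
              try ring
            rw [expand]
            have hfac2 : q ⬝ᵥ q * (q ⬝ᵥ q * p ⬝ᵥ p) - q ⬝ᵥ q * (p ⬝ᵥ q * p ⬝ᵥ q)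
                - (p ⬝ᵥ q * (q ⬝ᵥ q * p ⬝ᵥ q) - p ⬝ᵥ q * (p ⬝ᵥ q * q ⬝ᵥ q))
                = (q ⬝ᵥ q) * (p ⬝ᵥ p * q ⬝ᵥ q - (p ⬝ᵥ q) ^ 2) := by ring
            rw [hfac2, hd, mul_zero]
          have hps : p = ((p ⬝ᵥ q) / (q ⬝ᵥ q)) • q := by
            funext i
            have := congrFun hkey i
            simp only [Pi.sub_apply, Pi.smul_apply, smul_eq_mul, Pi.zero_apply] at this
            simp only [Pi.smul_apply, smul_eq_mul]
            field_simp
            linarith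
          refine ⟨q, hq0, α + β * ((p ⬝ᵥ q) / (q ⬝ᵥ q)), ?_⟩
          rw [h2, hps, Matrix.smul_vecMul]
          funext j
          simp only [Pi.add_apply, Pi.smul_apply, smul_eq_mul, smul_dotProduct,
            smul_eq_mul, dotProduct_smul]
          field_simp
          ring
      obtain ⟨A, B, hcons, hA, hB⟩ :=
        aux_construct_one Xm Xp Um As Bs hdata w hw0 μ heq
      have hA1 : w ᵥ* A = μ • w - (0 : ℝ) • (0 : Fin n → ℝ) := by rw [hA]; simp
      have hA2 : (0 : Fin n → ℝ) ᵥ* A = (0 : ℝ) • w + μ • (0 : Fin n → ℝ) := by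
        simp [Matrix.zero_vecMul]
      have hB2 : (0 : Fin n → ℝ) ᵥ* B = 0 := by simp [Matrix.zero_vecMul]
      have hfail := aux_hautus_fail A B w 0 μ 0 hA1 hA2 hB hB2
      have hnz := aux_eta_ne_zero (p := w) (q := 0) (fun h => hw0 h.1)
      have hrk := hctrl A B hcons ((μ : ℂ) + ((0 : ℝ) : ℂ) * Complex.I)
      exact aux_rank_ne_of_vecMul_eq_zero _ _ hnz hfail hrk
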